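/- arXiv:1811.00887 — 5 statements merged into one kernel-verified Lean document; each statement's English description precedes it below -/
import Mathlib

section
/- Every convex body K in R^d contains a Euclidean ball of radius delta(K)/(2d(d+1)), where delta(K) is the minimum width of K. -/
open Module Metric

noncomputable def minWidth {d : ℕ} (K : Set (EuclideanSpace ℝ (Fin d))) : ℝ :=
  ⨅ v : {v : EuclideanSpace ℝ (Fin d) // ‖v‖ = 1},
    ((⨆ x : K, (inner ℝ v.1 x.1 : ℝ)) - ⨅ x : K, (inner ℝ v.1 x.1 : ℝ))

theorem stmt_1 (d : ℕ) (hd : 1 ≤ d)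
    (K : Set (EuclideanSpace ℝ (Fin d)))
    (hKcomp : IsCompact K) (hKconv : Convex ℝ K) (hKint : (interior K).Nonempty) :
    ∃ x : EuclideanSpace ℝ (Fin d),
      Metric.closedBall x (minWidth K / (2 * d * (d + 1))) ⊆ K := by
  classical
  have hKne : K.Nonempty := hKint.mono interior_subset
  obtain ⟨x₀, hx₀⟩ := hKne
  haveI : Nonempty K := ⟨⟨x₀, hx₀⟩⟩
  have hd1 : (1 : ℝ) ≤ (d : ℝ) := by exact_mod_cast hd
  haveI hsph : Nonempty {v : EuclideanSpace ℝ (Fin d) // ‖v‖ = 1} := by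
    refine ⟨⟨EuclideanSpace.single ⟨0, hd⟩ (1 : ℝ), ?_⟩⟩
    simp [EuclideanSpace.norm_single]
  set H : EuclideanSpace ℝ (Fin d) → ℝ := fun u => ⨆ x : K, (inner ℝ u x.1 : ℝ) with hHdef
  set m : EuclideanSpace ℝ (Fin d) → ℝ := fun u => ⨅ x : K, (inner ℝ u x.1 : ℝ) with hmdef
  have hcont : ∀ u : EuclideanSpace ℝ (Fin d),
      Continuous fun x : EuclideanSpace ℝ (Fin d) => (inner ℝ u x : ℝ) :=
    fun u => continuous_const.inner continuous_id
  have hbddA : ∀ u, BddAbove (Set.range fun x : K => (inner ℝ u x.1 : ℝ)) := by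
    intro u
    rw [← Set.image_eq_range]
    exact (hKcomp.image (hcont u)).bddAbove
  have hbddB : ∀ u, BddBelow (Set.range fun x : K => (inner ℝ u x.1 : ℝ)) := by
    intro u
    rw [← Set.image_eq_range]
    exact (hKcomp.image (hcont u)).bddBelow
  have hleH : ∀ u, ∀ x ∈ K, (inner ℝ u x : ℝ) ≤ H u := fun u x hx =>
    le_ciSup (hbddA u) (⟨x, hx⟩ : K)
  have hmle : ∀ u, ∀ x ∈ K, m u ≤ (inner ℝ u x : ℝ) := fun u x hx =>
    ciInf_le (hbddB u) (⟨x, hx⟩ : K)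
  have hHm : ∀ u, m u ≤ H u := fun u => (hmle u x₀ hx₀).trans (hleH u x₀ hx₀)
  set w : ℝ := minWidth K with hwdef
  have hbb : BddBelow (Set.range fun v : {v : EuclideanSpace ℝ (Fin d) // ‖v‖ = 1} =>
      H v.1 - m v.1) := ⟨0, by rintro y ⟨v, rfl⟩; exact sub_nonneg.2 (hHm v.1)⟩
  have hwiInf : w = ⨅ v : {v : EuclideanSpace ℝ (Fin d) // ‖v‖ = 1}, (H v.1 - m v.1) := rfl
  have hw0 : 0 ≤ w := by
    rw [hwiInf]
    exact le_ciInf fun v => sub_nonneg.2 (hHm v.1)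
  have hwle : ∀ v : {v : EuclideanSpace ℝ (Fin d) // ‖v‖ = 1}, w ≤ H v.1 - m v.1 := by
    intro v; rw [hwiInf]; exact ciInf_le hbb v
  set ρ : ℝ := w / (2 * d * (d + 1)) with hρdef
  have hρ0 : 0 ≤ ρ := div_nonneg hw0 (by positivity)
  have hρle : ∀ v : {v : EuclideanSpace ℝ (Fin d) // ‖v‖ = 1},
      ρ ≤ (H v.1 - m v.1) / ((d : ℝ) + 1) := by
    intro v
    rw [hρdef, div_le_div_iff₀ (by positivity) (by positivity)]
    nlinarith [hwle v, hw0, mul_le_mul_of_nonneg_left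
      (show ((d : ℝ) + 1) ≤ 2 * d * (d + 1) by nlinarith) hw0,
      mul_le_mul_of_nonneg_right (hwle v) (show (0:ℝ) ≤ 2 * d * (d + 1) by positivity)]
  -- the family of sets for Helly
  set F : {v : EuclideanSpace ℝ (Fin d) // ‖v‖ = 1} → Set (EuclideanSpace ℝ (Fin d)) :=
    fun v => K ∩ {c | (inner ℝ v.1 c : ℝ) ≤ H v.1 - ρ} with hFdef
  have hFconv : ∀ v, Convex ℝ (F v) := by
    intro v
    refine hKconv.inter (convex_halfSpace_le ?_ _)
    exact ⟨fun x y => inner_add_right _ _ _, fun c x => real_inner_smul_right _ _ _⟩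
  have hFcomp : ∀ v, IsCompact (F v) :=
    fun v => hKcomp.inter_right (isClosed_le (hcont v.1) continuous_const)
  -- minimizers
  have hmin : ∀ v : {v : EuclideanSpace ℝ (Fin d) // ‖v‖ = 1},
      ∃ x ∈ K, ∀ y ∈ K, (inner ℝ v.1 x : ℝ) ≤ inner ℝ v.1 y := by
    intro v
    obtain ⟨x, hxK, hxmin⟩ := hKcomp.exists_isMinOn ⟨x₀, hx₀⟩ (hcont v.1).continuousOn
    exact ⟨x, hxK, fun y hy => hxmin hy⟩
  choose xm hxmK hxmin using hmin
  have hinter : ∀ I : Finset {v : EuclideanSpace ℝ (Fin d) // ‖v‖ = 1},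
      I.card ≤ finrank ℝ (EuclideanSpace ℝ (Fin d)) + 1 → (⋂ v ∈ I, F v).Nonempty := by
    intro I hcard
    rw [finrank_euclideanSpace_fin] at hcard
    rcases I.eq_empty_or_nonempty with rfl | hIne
    · simp
    set k : ℕ := I.card with hk
    have hkpos : 0 < k := Finset.card_pos.2 hIne
    have hkR : (0 : ℝ) < (k : ℝ) := by exact_mod_cast hkpos
    set c : EuclideanSpace ℝ (Fin d) := (k : ℝ)⁻¹ • ∑ v ∈ I, xm v with hc
    have hcK : c ∈ K := by
      rw [hc, Finset.smul_sum]
      refine hKconv.sum_mem (fun v _ => by positivity) ?_ (fun v hv => hxmK v)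
      rw [Finset.sum_const, nsmul_eq_mul, ← hk, mul_inv_cancel₀ hkR.ne']
    refine ⟨c, Set.mem_iInter₂.2 fun v hv => ⟨hcK, ?_⟩⟩
    have hsum : (inner ℝ v.1 c : ℝ) = (k : ℝ)⁻¹ * ∑ u ∈ I, (inner ℝ v.1 (xm u) : ℝ) := by
      rw [hc, real_inner_smul_right, inner_sum]
    have hsplit : ∑ u ∈ I, (inner ℝ v.1 (xm u) : ℝ)
        = (inner ℝ v.1 (xm v) : ℝ) + ∑ u ∈ I.erase v, (inner ℝ v.1 (xm u) : ℝ) :=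
      (Finset.add_sum_erase I _ hv).symm
    have h1 : (inner ℝ v.1 (xm v) : ℝ) ≤ m v.1 :=
      le_ciInf fun x => hxmin v x.1 x.2
    have h2 : ∑ u ∈ I.erase v, (inner ℝ v.1 (xm u) : ℝ) ≤ ((k - 1 : ℕ) : ℝ) * H v.1 := by
      have := Finset.sum_le_card_nsmul (I.erase v)
        (fun u => (inner ℝ v.1 (xm u) : ℝ)) (H v.1) (fun u _ => hleH v.1 (xm u) (hxmK u))
      rwa [Finset.card_erase_of_mem hv, nsmul_eq_mul, ← hk] at this
    have hk1 : ((k - 1 : ℕ) : ℝ) = (k : ℝ) - 1 := by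
      rw [Nat.cast_sub hkpos]; simp
    have h3 : (inner ℝ v.1 c : ℝ) ≤ (k : ℝ)⁻¹ * (m v.1 + ((k : ℝ) - 1) * H v.1) := by
      rw [hsum]
      apply mul_le_mul_of_nonneg_left _ (by positivity)
      rw [hsplit]
      rw [hk1] at h2
      linarith
    have h4 : (k : ℝ)⁻¹ * (m v.1 + ((k : ℝ) - 1) * H v.1)
        = H v.1 - (H v.1 - m v.1) / (k : ℝ) := by
      field_simp
      ring
    have h5 : (H v.1 - m v.1) / ((d : ℝ) + 1) ≤ (H v.1 - m v.1) / (k : ℝ) := by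
      apply div_le_div_of_nonneg_left (sub_nonneg.2 (hHm v.1)) hkR
      exact_mod_cast hcard
    have h6 := hρle v
    rw [h4] at h3
    simp only [Set.mem_setOf_eq]
    linarith
  obtain ⟨c, hcmem⟩ := Convex.helly_theorem_compact' (𝕜 := ℝ) hFconv hFcomp hinter
  have hcF : ∀ v : {v : EuclideanSpace ℝ (Fin d) // ‖v‖ = 1}, c ∈ F v :=
    fun v => Set.mem_iInter.1 hcmem v
  have hcK : c ∈ K := (hcF (Classical.arbitrary _)).1
  refine ⟨c, fun y hy => ?_⟩
  by_contra hyK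
  obtain ⟨f, s, hfK, hfy⟩ :=
    geometric_hahn_banach_closed_point hKconv hKcomp.isClosed hyK
  set v₀ : EuclideanSpace ℝ (Fin d) :=
    (InnerProductSpace.toDual ℝ (EuclideanSpace ℝ (Fin d))).symm f with hv₀def
  have hv₀ : ∀ x, (inner ℝ v₀ x : ℝ) = f x := fun x => InnerProductSpace.toDual_symm_apply
  have hv₀ne : v₀ ≠ 0 := by
    intro h
    have h1 : f c = (inner ℝ v₀ c : ℝ) := (hv₀ c).symm
    have h2 : f y = (inner ℝ v₀ y : ℝ) := (hv₀ y).symm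
    rw [h, inner_zero_left] at h1 h2
    have := hfK c hcK
    linarith
  set u : EuclideanSpace ℝ (Fin d) := ‖v₀‖⁻¹ • v₀ with hu
  have hun : ‖u‖ = 1 := by
    rw [hu, norm_smul, norm_inv, norm_norm, inv_mul_cancel₀ (norm_ne_zero_iff.2 hv₀ne)]
  have hinvpos : (0 : ℝ) < ‖v₀‖⁻¹ := inv_pos.2 (norm_pos_iff.2 hv₀ne)
  have huinner : ∀ x, (inner ℝ u x : ℝ) = ‖v₀‖⁻¹ * f x := by
    intro x; rw [hu, real_inner_smul_left, hv₀]
  have hHu : H u ≤ ‖v₀‖⁻¹ * s := by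
    apply ciSup_le
    intro x
    rw [huinner]
    exact mul_le_mul_of_nonneg_left (hfK x.1 x.2).le hinvpos.le
  have hyu : ‖v₀‖⁻¹ * s < (inner ℝ u y : ℝ) := by
    rw [huinner]
    exact (mul_lt_mul_iff_right₀ hinvpos).2 hfy
  have hbound := (hcF ⟨u, hun⟩).2
  simp only [Set.mem_setOf_eq] at hbound
  have hdist : ‖y - c‖ ≤ ρ := by
    rw [← dist_eq_norm]
    exact mem_closedBall.1 hy
  have hcs : (inner ℝ u (y - c) : ℝ) ≤ ρ := by
    calc (inner ℝ u (y - c) : ℝ) ≤ ‖u‖ * ‖y - c‖ := real_inner_le_norm _ _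
      _ = ‖y - c‖ := by rw [hun, one_mul]
      _ ≤ ρ := hdist
  have : (inner ℝ u y : ℝ) ≤ H u := by
    have := inner_sub_right (𝕜 := ℝ) u y c
    linarith [hcs, hbound, this ▸ hcs]
  linarith
end

section
/- Let z in R^d, R > r > 0, and let Omega_T be the set of endpoints o_T of sequences (o_1,...,o_T) with o_t in K_t ∩ B(z,R) for each t, o_1 in B(z,R), and total movement sum_{t} ||o_t - o_{t+1}|| <= r (where K_1,...,K_T are convex sets). Suppose Omega_T is nonempty and Omega_T is contained in the open ball B°(z, R - r). Then every sequence (o_t) with o_t in K_t and total movement <= r (starting from a point in B(z,R)) stays inside B(z,R) for all t, and hence ends in Omega_T. -/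
open Finset

lemma chain_norm {E : Type*} [NormedAddCommGroup E] (f : ℕ → E) (a : ℕ) :
    ∀ b, a ≤ b → ‖f a - f b‖ ≤ ∑ s ∈ Finset.Ico a b, ‖f s - f (s + 1)‖ := by
  intro b hab
  induction b, hab using Nat.le_induction with
  | base => simp
  | succ b hab ih =>
    have h3 : f a - f (b + 1) = (f a - f b) + (f b - f (b + 1)) := by abel
    rw [Finset.sum_Ico_succ_top hab, h3]
    exact le_trans (norm_add_le _ _) (add_le_add ih le_rfl)

theorem stmt_3 (d T : ℕ) (hT : 1 ≤ T)
    (z : EuclideanSpace ℝ (Fin d)) (R r : ℝ) (hr : 0 < r) (hR : r < R)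
    (K : ℕ → Set (EuclideanSpace ℝ (Fin d)))
    (hK : ∀ t, Convex ℝ (K t))
    (ΩT : Set (EuclideanSpace ℝ (Fin d)))
    (hΩT : ΩT = {y | ∃ o : ℕ → EuclideanSpace ℝ (Fin d),
      (∀ t ∈ Finset.Icc 1 T, o t ∈ K t ∩ Metric.closedBall z R) ∧ o T = y ∧
      ∑ t ∈ Finset.Ico 1 T, ‖o t - o (t + 1)‖ ≤ r})
    (hne : ΩT.Nonempty) (hloc : ΩT ⊆ Metric.ball z (R - r)) :
    ∀ o : ℕ → EuclideanSpace ℝ (Fin d),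
      (∀ t ∈ Finset.Icc 1 T, o t ∈ K t) → o 1 ∈ Metric.closedBall z R →
      (∑ t ∈ Finset.Ico 1 T, ‖o t - o (t + 1)‖) ≤ r →
      (∀ t ∈ Finset.Icc 1 T, o t ∈ Metric.closedBall z R) ∧ o T ∈ ΩT := by
  -- extract a witness path p
  obtain ⟨y, hy⟩ := hne
  rw [hΩT] at hy
  obtain ⟨p, hp, hpT, hpmov⟩ := hy
  intro o ho ho1 homov
  set q : ℝ → ℕ → EuclideanSpace ℝ (Fin d) :=
    fun lam t => lam • o t + (1 - lam) • p t with hq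
  have h1T : (1 : ℕ) ∈ Finset.Icc 1 T := by
    simp [hT]
  have hTT : T ∈ Finset.Icc 1 T := by
    simp [hT]
  have hcont : ∀ t, Continuous fun lam : ℝ => q lam t := fun t =>
    (continuous_id.smul continuous_const).add
      ((continuous_const.sub continuous_id).smul continuous_const)
  -- membership in K
  have hKq : ∀ lam ∈ Set.Icc (0:ℝ) 1, ∀ t ∈ Finset.Icc 1 T, q lam t ∈ K t := by
    intro lam ⟨h0, h1⟩ t ht
    exact hK t (ho t ht) (hp t ht).1 h0 (by linarith) (by ring)
  -- movement of q
  have hmovq : ∀ lam ∈ Set.Icc (0:ℝ) 1,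
      ∑ t ∈ Finset.Ico 1 T, ‖q lam t - q lam (t + 1)‖ ≤ r := by
    intro lam ⟨h0, h1⟩
    calc ∑ t ∈ Finset.Ico 1 T, ‖q lam t - q lam (t + 1)‖
        ≤ ∑ t ∈ Finset.Ico 1 T,
            (lam * ‖o t - o (t + 1)‖ + (1 - lam) * ‖p t - p (t + 1)‖) := by
          refine Finset.sum_le_sum fun t _ => ?_
          have hdiff : q lam t - q lam (t + 1) =
              lam • (o t - o (t + 1)) + (1 - lam) • (p t - p (t + 1)) := by
            simp only [hq, smul_sub]; abel
          rw [hdiff]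
          refine (norm_add_le _ _).trans ?_
          rw [norm_smul, norm_smul, Real.norm_eq_abs, Real.norm_eq_abs,
            abs_of_nonneg h0, abs_of_nonneg (by linarith : (0:ℝ) ≤ 1 - lam)]
      _ = lam * (∑ t ∈ Finset.Ico 1 T, ‖o t - o (t + 1)‖)
          + (1 - lam) * (∑ t ∈ Finset.Ico 1 T, ‖p t - p (t + 1)‖) := by
          rw [Finset.sum_add_distrib, Finset.mul_sum, Finset.mul_sum]
      _ ≤ lam * r + (1 - lam) * r := by
          refine add_le_add (mul_le_mul_of_nonneg_left homov h0)
            (mul_le_mul_of_nonneg_left hpmov (by linarith))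
      _ = r := by ring
  -- key step: if q lam stays in the closed ball, then it stays strictly inside
  have hkey : ∀ lam ∈ Set.Icc (0:ℝ) 1,
      (∀ t ∈ Finset.Icc 1 T, q lam t ∈ Metric.closedBall z R) →
      ∀ t ∈ Finset.Icc 1 T, dist (q lam t) z < R := by
    intro lam hlam hle t ht
    have hmem : q lam T ∈ ΩT := by
      rw [hΩT]
      exact ⟨q lam, fun s hs => ⟨hKq lam hlam s hs, hle s hs⟩, rfl, hmovq lam hlam⟩
    have hTd : dist (q lam T) z < R - r := by
      simpa [Metric.mem_ball] using hloc hmem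
    have ht1 := (Finset.mem_Icc.mp ht).1
    have ht2 := (Finset.mem_Icc.mp ht).2
    calc dist (q lam t) z ≤ dist (q lam t) (q lam T) + dist (q lam T) z :=
          dist_triangle _ _ _
      _ ≤ (∑ s ∈ Finset.Ico t T, ‖q lam s - q lam (s + 1)‖) + dist (q lam T) z := by
          rw [dist_eq_norm]
          exact add_le_add (chain_norm (q lam) t T ht2) le_rfl
      _ ≤ (∑ s ∈ Finset.Ico 1 T, ‖q lam s - q lam (s + 1)‖) + dist (q lam T) z := by
          refine add_le_add (Finset.sum_le_sum_of_subset_of_nonneg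
            (Finset.Ico_subset_Ico ht1 le_rfl) fun _ _ _ => norm_nonneg _) le_rfl
      _ ≤ r + dist (q lam T) z := add_le_add (hmovq lam hlam) le_rfl
      _ < r + (R - r) := by linarith
      _ = R := by ring
  -- q 0 = p stays in the closed ball
  have hP0 : ∀ t ∈ Finset.Icc 1 T, q 0 t ∈ Metric.closedBall z R := by
    intro t ht
    have : q 0 t = p t := by simp [hq]
    rw [this]
    exact (hp t ht).2
  -- connectedness argument: q 1 = o stays in the closed ball
  have hP1 : ∀ t ∈ Finset.Icc 1 T, q 1 t ∈ Metric.closedBall z R := by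
    by_contra hcon
    set U : Set ℝ := ⋂ t ∈ Finset.Icc 1 T, {l : ℝ | dist (q l t) z < R} with hU
    set C : Set ℝ := ⋂ t ∈ Finset.Icc 1 T, {l : ℝ | dist (q l t) z ≤ R} with hC
    have hUopen : IsOpen U := by
      refine isOpen_biInter_finset fun t _ => ?_
      exact isOpen_lt ((hcont t).dist continuous_const) continuous_const
    have hCclosed : IsClosed C := by
      refine isClosed_biInter fun t _ => ?_
      exact isClosed_le ((hcont t).dist continuous_const) continuous_const
    have hCU : ∀ lam ∈ Set.Icc (0:ℝ) 1, lam ∈ C → lam ∈ U := by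
      intro lam hlam hlC
      simp only [hC, Set.mem_iInter, Set.mem_setOf_eq] at hlC
      simp only [hU, Set.mem_iInter, Set.mem_setOf_eq]
      exact fun t ht => hkey lam hlam (fun s hs => Metric.mem_closedBall.mpr (hlC s hs)) t ht
    have hcover : Set.Icc (0:ℝ) 1 ⊆ U ∪ Cᶜ := by
      intro lam hlam
      by_cases hc : lam ∈ C
      · exact Or.inl (hCU lam hlam hc)
      · exact Or.inr hc
    have h0U : (0:ℝ) ∈ Set.Icc (0:ℝ) 1 ∩ U := by
      refine ⟨⟨le_refl _, zero_le_one⟩, ?_⟩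
      refine hCU 0 ⟨le_refl _, zero_le_one⟩ ?_
      simp only [hC, Set.mem_iInter, Set.mem_setOf_eq]
      exact fun t ht => Metric.mem_closedBall.mp (hP0 t ht)
    have h1C : (1:ℝ) ∈ Set.Icc (0:ℝ) 1 ∩ Cᶜ := by
      refine ⟨⟨zero_le_one, le_refl _⟩, ?_⟩
      intro h1
      apply hcon
      simp only [hC, Set.mem_iInter, Set.mem_setOf_eq] at h1
      exact fun t ht => Metric.mem_closedBall.mpr (h1 t ht)
    obtain ⟨x, hx⟩ := isPreconnected_Icc U Cᶜ hUopen hCclosed.isOpen_compl hcover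
      ⟨0, h0U⟩ ⟨1, h1C⟩
    have hxU : x ∈ U := hx.2.1
    have hxC : x ∉ C := hx.2.2
    apply hxC
    simp only [hU, Set.mem_iInter, Set.mem_setOf_eq] at hxU
    simp only [hC, Set.mem_iInter, Set.mem_setOf_eq]
    exact fun t ht => le_of_lt (hxU t ht)
  have hfin : ∀ t ∈ Finset.Icc 1 T, o t ∈ Metric.closedBall z R := by
    intro t ht
    have : q 1 t = o t := by simp [hq]
    rw [← this]
    exact hP1 t ht
  refine ⟨hfin, ?_⟩
  rw [hΩT]
  exact ⟨o, fun t ht => ⟨ho t ht, hfin t ht⟩, rfl, homov⟩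
end

section
/- Let alpha >= 1, r > 0, and R = 7·alpha·r. Let z, z_new, o, o_new in R^d with ||z_new - z|| <= R and ||o - o_new|| >= r. Define Phi = max(||z - o|| - alpha·r, alpha·r) and, with r_new arbitrary in {r/2, 2r} and the corresponding Phi_new = max(||z_new - o_new|| - alpha·r_new, alpha·r_new). Then Phi_new <= Phi + (1 + 8·alpha)·||o - o_new||. -/
theorem stmt_5 (d : ℕ) (α r R r_new : ℝ) (hα : 1 ≤ α) (hr : 0 < r)
    (hR : R = 7 * α * r) (hrnew : r_new = r / 2 ∨ r_new = 2 * r)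
    (z z_new o o_new : EuclideanSpace ℝ (Fin d))
    (hz : ‖z_new - z‖ ≤ R) (ho : r ≤ ‖o - o_new‖) :
    max (‖z_new - o_new‖ - α * r_new) (α * r_new) ≤
      max (‖z - o‖ - α * r) (α * r) + (1 + 8 * α) * ‖o - o_new‖ := by
  have heq : z_new - o_new = (z_new - z) + (z - o) + (o - o_new) := by abel
  have key : ‖z_new - o_new‖ ≤ ‖z_new - z‖ + ‖z - o‖ + ‖o - o_new‖ := by
    rw [heq]; exact norm_add₃_le
  have hrn : 0 < r_new ∧ r_new ≤ 2 * r := by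
    rcases hrnew with h | h <;> constructor <;> linarith
  apply max_le
  · calc ‖z_new - o_new‖ - α * r_new
        ≤ (‖z - o‖ - α * r) + (1 + 8 * α) * ‖o - o_new‖ := by nlinarith [hrn.1, hrn.2]
      _ ≤ _ := add_le_add (le_max_left _ _) le_rfl
  · calc α * r_new ≤ α * r + (1 + 8 * α) * ‖o - o_new‖ := by nlinarith [hrn.1, hrn.2]
      _ ≤ _ := add_le_add (le_max_right _ _) le_rfl
end

section
/- Let theta be uniformly distributed on the sphere S = {theta in V^perp : ||theta|| = gamma·r} of a k-dimensional subspace V^perp of R^d, and let u_t(theta) in V^perp satisfy u_T(theta) = theta and ||u_t(theta) - theta - m_t|| <= 2r for all t, where m_t = E[u_t(theta)]. Define Sigma_t = E[(u_t(theta) - m_t)(u_t(theta) - m_t)^T] as an operator on V^perp. If gamma >= 12k, then Sigma_t >= (gamma^2·r^2/(2k))·Id (in the positive semidefinite order on V^perp). -/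
open MeasureTheory

theorem stmt_10 (d k : ℕ) (hk : 1 ≤ k) (γ r : ℝ) (hr : 0 < r) (hγ : 12 * (k : ℝ) ≤ γ)
    (Ωs : Type) [MeasurableSpace Ωs] (μ : Measure Ωs) [IsProbabilityMeasure μ]
    (V : Submodule ℝ (EuclideanSpace ℝ (Fin d)))
    (hdim : Module.finrank ℝ Vᗮ = k)
    (θ : Ωs → EuclideanSpace ℝ (Fin d)) (hθmeas : Measurable θ)
    (hθW : ∀ ω, θ ω ∈ Vᗮ) (hθnorm : ∀ ω, ‖θ ω‖ = γ * r)
    -- θ is uniformly distributed on the sphere of radius γ·r in Vᗮ, so in particular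
    -- E[θ θᵀ] = ((γ r)²/k)·Id as an operator on Vᗮ:
    (hiso : ∀ v ∈ Vᗮ, ∫ ω, (inner ℝ v (θ ω) : ℝ) ^ 2 ∂μ = (γ * r) ^ 2 / k * ‖v‖ ^ 2)
    (T : ℕ) (u : ℕ → Ωs → EuclideanSpace ℝ (Fin d))
    (humeas : ∀ t, Measurable (u t)) (huW : ∀ t ω, u t ω ∈ Vᗮ)
    (huint : ∀ t, Integrable (u t) μ)
    (m : ℕ → EuclideanSpace ℝ (Fin d)) (hm : ∀ t, m t = ∫ ω, u t ω ∂μ)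
    (huT : ∀ ω, u T ω = θ ω)
    (hxi : ∀ t ≤ T, ∀ ω, ‖u t ω - θ ω - m t‖ ≤ 2 * r) :
    -- conclusion: Σ_t ⪰ (γ² r² / (2k))·Id on Vᗮ, as quadratic forms
    ∀ t ≤ T, ∀ v ∈ Vᗮ,
      γ ^ 2 * r ^ 2 / (2 * k) * ‖v‖ ^ 2 ≤ ∫ ω, (inner ℝ v (u t ω - m t) : ℝ) ^ 2 ∂μ := by
  intro t ht v hv
  have hk' : (1:ℝ) ≤ k := by exact_mod_cast hk
  have hkpos : (0:ℝ) < k := by linarith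
  have hγpos : (0:ℝ) < γ := by nlinarith
  set a : Ωs → ℝ := fun ω => (inner ℝ v (θ ω) : ℝ) with ha_def
  set b : Ωs → ℝ := fun ω => (inner ℝ v (u t ω - θ ω - m t) : ℝ) with hb_def
  set A := ‖v‖ * (γ * r) with hA
  set B := ‖v‖ * (2 * r) with hB
  have hA0 : 0 ≤ A := by positivity
  have hB0 : 0 ≤ B := by positivity
  have hdecomp : ∀ ω, (inner ℝ v (u t ω - m t) : ℝ) = a ω + b ω := by
    intro ω
    rw [ha_def, hb_def]
    simp only
    rw [← inner_add_right]
    congr 1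
    abel
  have haabs : ∀ ω, |a ω| ≤ A := by
    intro ω
    calc |a ω| ≤ ‖v‖ * ‖θ ω‖ := abs_real_inner_le_norm v (θ ω)
      _ = A := by rw [hθnorm ω]
  have hbabs : ∀ ω, |b ω| ≤ B := by
    intro ω
    calc |b ω| ≤ ‖v‖ * ‖u t ω - θ ω - m t‖ := abs_real_inner_le_norm _ _
      _ ≤ B := mul_le_mul_of_nonneg_left (hxi t ht ω) (norm_nonneg v)
  have hpt : ∀ ω, a ω ^ 2 - 2 * A * B ≤ (inner ℝ v (u t ω - m t) : ℝ) ^ 2 := by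
    intro ω
    rw [hdecomp ω]
    obtain ⟨ha1, ha2⟩ := abs_le.mp (haabs ω)
    obtain ⟨hb1, hb2⟩ := abs_le.mp (hbabs ω)
    nlinarith [sq_nonneg (b ω), mul_nonneg (by linarith : (0:ℝ) ≤ A - a ω) (by linarith : (0:ℝ) ≤ B - b ω), mul_nonneg (by linarith : (0:ℝ) ≤ A + a ω) (by linarith : (0:ℝ) ≤ B + b ω)]
  have hmeas1 : Measurable fun ω => (inner ℝ v (u t ω - m t) : ℝ) :=
    measurable_const.inner ((humeas t).sub measurable_const)
  have hmeasa : Measurable a := measurable_const.inner hθmeas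
  have hint1 : Integrable (fun ω => (inner ℝ v (u t ω - m t) : ℝ) ^ 2) μ := by
    apply Integrable.mono' (integrable_const ((A + B) ^ 2))
      ((hmeas1.pow_const 2).aestronglyMeasurable)
    filter_upwards with ω
    rw [Real.norm_eq_abs, abs_pow]
    have h1 : |(inner ℝ v (u t ω - m t) : ℝ)| ≤ A + B := by
      rw [hdecomp ω]
      calc |a ω + b ω| ≤ |a ω| + |b ω| := abs_add_le _ _
        _ ≤ A + B := add_le_add (haabs ω) (hbabs ω)
    exact pow_le_pow_left₀ (abs_nonneg _) h1 2
  have hinta : Integrable (fun ω => a ω ^ 2) μ := by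
    apply Integrable.mono' (integrable_const (A ^ 2))
      ((hmeasa.pow_const 2).aestronglyMeasurable)
    filter_upwards with ω
    rw [Real.norm_eq_abs, abs_pow]
    exact pow_le_pow_left₀ (abs_nonneg _) (haabs ω) 2
  have hint2 : Integrable (fun ω => a ω ^ 2 - 2 * A * B) μ :=
    hinta.sub (integrable_const _)
  have hmono : ∫ ω, (a ω ^ 2 - 2 * A * B) ∂μ ≤ ∫ ω, (inner ℝ v (u t ω - m t) : ℝ) ^ 2 ∂μ :=
    integral_mono hint2 hint1 hpt
  rw [integral_sub hinta (integrable_const _), integral_const, probReal_univ,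
    one_smul, hiso v hv] at hmono
  have h8 : 8 * (k:ℝ) * γ ≤ γ ^ 2 := by
    nlinarith [mul_le_mul_of_nonneg_right hγ hγpos.le, mul_pos hkpos hγpos]
  have key : γ ^ 2 / (2 * k) + 4 * γ ≤ γ ^ 2 / k := by
    rw [div_add' _ _ _ (ne_of_gt (by positivity : (0:ℝ) < 2 * k)),
      div_le_div_iff₀ (by positivity) hkpos]
    nlinarith [mul_le_mul_of_nonneg_right h8 hkpos.le]
  have hrv : (0:ℝ) ≤ r ^ 2 * ‖v‖ ^ 2 := by positivity
  have key2 : γ ^ 2 / (2 * k) * (r ^ 2 * ‖v‖ ^ 2) + 4 * γ * (r ^ 2 * ‖v‖ ^ 2)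
      ≤ γ ^ 2 / k * (r ^ 2 * ‖v‖ ^ 2) := by
    calc γ ^ 2 / (2 * k) * (r ^ 2 * ‖v‖ ^ 2) + 4 * γ * (r ^ 2 * ‖v‖ ^ 2)
        = (γ ^ 2 / (2 * k) + 4 * γ) * (r ^ 2 * ‖v‖ ^ 2) := by ring
      _ ≤ γ ^ 2 / k * (r ^ 2 * ‖v‖ ^ 2) := mul_le_mul_of_nonneg_right key hrv
  have e1 : γ ^ 2 * r ^ 2 / (2 * k) * ‖v‖ ^ 2 = γ ^ 2 / (2 * k) * (r ^ 2 * ‖v‖ ^ 2) := by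
    ring
  have e2 : (γ * r) ^ 2 / k * ‖v‖ ^ 2 = γ ^ 2 / k * (r ^ 2 * ‖v‖ ^ 2) := by ring
  have e3 : 2 * A * B = 4 * γ * (r ^ 2 * ‖v‖ ^ 2) := by rw [hA, hB]; ring
  rw [e2, e3] at hmono
  rw [e1]
  linarith [hmono, key2]
end

section
/- Suppose Omega ⊆ C := {y in R^d : ||P_V y|| <= gamma'·r} contains in its projection P_{V^perp}(tilde-Omega) the entire sphere S = {theta in V^perp : ||theta|| = gamma·r}, where tilde-Omega is the set of endpoints of paths (y_t) with y_t in K_t ∩ C and total movement <= r, gamma >= 12k, k = dim(V^perp). Then there exists a path (Y_t) with Y_t in K_t ∩ V for all t and total movement sum ||Y_t - Y_{t+1}|| <= (1 + (2 + 4·gamma')·k/gamma)·r. -/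
open Finset RealInnerProductSpace

lemma tele_aux {E : Type*} [AddCommGroup E] (f : ℕ → E) (m : ℕ) :
    ∀ n, m ≤ n → f m - f n = ∑ i ∈ Finset.Ico m n, (f i - f (i + 1)) := by
  intro n hn
  induction n, hn using Nat.le_induction with
  | base => simp
  | succ n hmn ih => rw [Finset.sum_Ico_succ_top (by omega), ← ih]; abel

set_option maxHeartbeats 1000000 in
theorem stmt_17 (d k T : ℕ) (hT : 1 ≤ T) (hk : 1 ≤ k)
    (γ γ' r : ℝ) (hr : 0 < r) (hγ' : 0 < γ') (hγ : 12 * (k : ℝ) ≤ γ)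
    (V : Submodule ℝ (EuclideanSpace ℝ (Fin d)))
    (hdim : Module.finrank ℝ Vᗮ = k)
    (K : ℕ → Set (EuclideanSpace ℝ (Fin d))) (hK : ∀ t, Convex ℝ (K t))
    (C : Set (EuclideanSpace ℝ (Fin d)))
    (hC : C = {y | ‖(V.orthogonalProjectionOnto y : EuclideanSpace ℝ (Fin d))‖ ≤ γ' * r})
    (tildeΩ : Set (EuclideanSpace ℝ (Fin d)))
    (htildeΩ : tildeΩ = {y | y ∈ C ∧ ∃ p : ℕ → EuclideanSpace ℝ (Fin d),
      p T = y ∧ (∀ t ∈ Finset.Icc 1 T, p t ∈ K t ∩ C) ∧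
      ∑ t ∈ Finset.Ico 1 T, ‖p t - p (t + 1)‖ ≤ r})
    -- the sphere of radius γ·r in Vᗮ is contained in the projection of tildeΩ
    (hsphere : ∀ θ : EuclideanSpace ℝ (Fin d), θ ∈ Vᗮ → ‖θ‖ = γ * r →
      ∃ y ∈ tildeΩ, (Vᗮ.orthogonalProjectionOnto y : EuclideanSpace ℝ (Fin d)) = θ) :
    ∃ Y : ℕ → EuclideanSpace ℝ (Fin d),
      (∀ t ∈ Finset.Icc 1 T, Y t ∈ K t ∧ Y t ∈ V) ∧
        ∑ t ∈ Finset.Ico 1 T, ‖Y t - Y (t + 1)‖ ≤ (1 + (2 + 4 * γ') * k / γ) * r := by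
  -- basic positivity
  have hkR : (1:ℝ) ≤ (k:ℝ) := by exact_mod_cast hk
  have hγpos : (0:ℝ) < γ := lt_of_lt_of_le (by nlinarith) hγ
  have hγrpos : (0:ℝ) < γ * r := mul_pos hγpos hr
  have hγk : (k:ℝ) < γ := by nlinarith
  -- projection is 1-Lipschitz (in coercion form)
  have hPLip : ∀ (U : Submodule ℝ (EuclideanSpace ℝ (Fin d))) (w : EuclideanSpace ℝ (Fin d)),
      ‖(U.orthogonalProjectionOnto w : EuclideanSpace ℝ (Fin d))‖ ≤ ‖w‖ := by
    intro U w
    calc ‖(U.orthogonalProjectionOnto w : EuclideanSpace ℝ (Fin d))‖ = ‖U.orthogonalProjectionOnto w‖ := rfl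
      _ ≤ ‖U.orthogonalProjectionOnto‖ * ‖w‖ := (U.orthogonalProjectionOnto).le_opNorm w
      _ ≤ 1 * ‖w‖ := by gcongr; exact Submodule.orthogonalProjectionOnto_norm_le U
      _ = ‖w‖ := one_mul _
  -- orthonormal basis of Vᗮ
  let B : OrthonormalBasis (Fin k) ℝ ↥Vᗮ := (stdOrthonormalBasis ℝ ↥Vᗮ).reindex (finCongr hdim)
  let e : Fin k → EuclideanSpace ℝ (Fin d) := fun j => (B j : EuclideanSpace ℝ (Fin d))
  have he_mem : ∀ j, e j ∈ Vᗮ := fun j => (B j).2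
  have he_norm : ∀ j, ‖e j‖ = 1 := fun j => B.orthonormal.1 j
  have he_repr : ∀ x ∈ Vᗮ, ∑ j, ⟪e j, x⟫ • e j = x := by
    intro x hx
    have h := B.sum_repr' ⟨x, hx⟩
    have := congrArg (Submodule.subtype Vᗮ) h
    simpa [Submodule.coe_sum, e] using this
  -- sign function
  let sgn : Bool → ℝ := fun s => if s then 1 else -1
  -- sphere points
  let θ : Fin k → Bool → EuclideanSpace ℝ (Fin d) := fun j s => (sgn s * (γ * r)) • e j
  have hθ_mem : ∀ j s, θ j s ∈ Vᗮ := fun j s => Submodule.smul_mem _ _ (he_mem j)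
  have hθ_norm : ∀ j s, ‖θ j s‖ = γ * r := by
    intro j s
    have : |sgn s| = 1 := by cases s <;> simp [sgn]
    rw [norm_smul, he_norm, Real.norm_eq_abs, abs_mul, this, mul_one, one_mul,
      abs_of_pos hγrpos]
  -- choose paths
  have hchoice : ∀ (j : Fin k) (s : Bool), ∃ q : ℕ → EuclideanSpace ℝ (Fin d),
      (Vᗮ.orthogonalProjectionOnto (q T) : EuclideanSpace ℝ (Fin d)) = θ j s ∧
      (∀ t ∈ Finset.Icc 1 T, q t ∈ K t ∧ q t ∈ C) ∧
      ∑ t ∈ Finset.Ico 1 T, ‖q t - q (t + 1)‖ ≤ r := by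
    intro j s
    obtain ⟨y, hy, hproj⟩ := hsphere (θ j s) (hθ_mem j s) (hθ_norm j s)
    rw [htildeΩ] at hy
    obtain ⟨hyC, q, hqT, hq1, hq2⟩ := hy
    exact ⟨q, by rw [hqT]; exact hproj, fun t ht => ⟨(hq1 t ht).1, (hq1 t ht).2⟩, hq2⟩
  choose p hpT hpmem hpsum using hchoice
  -- projections of the paths
  let u : Fin k → Bool → ℕ → EuclideanSpace ℝ (Fin d) := fun j s t => (Vᗮ.orthogonalProjectionOnto (p j s t) : EuclideanSpace ℝ (Fin d))
  have hu_mem : ∀ j s t, u j s t ∈ Vᗮ := fun j s t => (Vᗮ.orthogonalProjectionOnto (p j s t)).2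
  have huT : ∀ j s, u j s T = θ j s := fun j s => hpT j s
  have hustep : ∀ j s t t', ‖u j s t - u j s t'‖ ≤ ‖p j s t - p j s t'‖ := by
    intro j s t t'
    have : u j s t - u j s t' = (Vᗮ.orthogonalProjectionOnto (p j s t - p j s t') : EuclideanSpace ℝ (Fin d)) := by
      simp [u, map_sub]
    rw [this]; exact hPLip _ _
  have husum : ∀ j s, ∑ t ∈ Finset.Ico 1 T, ‖u j s t - u j s (t+1)‖ ≤ r := by
    intro j s
    refine le_trans (Finset.sum_le_sum fun t _ => hustep j s t (t+1)) (hpsum j s)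
  have hdrift : ∀ j s, ∀ t ∈ Finset.Icc 1 T, ‖u j s t - θ j s‖ ≤ r := by
    intro j s t ht
    rw [Finset.mem_Icc] at ht
    rw [← huT j s, tele_aux (u j s) t T ht.2]
    calc ‖∑ i ∈ Finset.Ico t T, (u j s i - u j s (i+1))‖
        ≤ ∑ i ∈ Finset.Ico t T, ‖u j s i - u j s (i+1)‖ := norm_sum_le _ _
      _ ≤ ∑ i ∈ Finset.Ico 1 T, ‖u j s i - u j s (i+1)‖ := by
          refine Finset.sum_le_sum_of_subset_of_nonneg ?_ (fun i _ _ => norm_nonneg _)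
          exact Finset.Ico_subset_Ico ht.1 le_rfl
      _ ≤ r := husum j s
  -- V-components
  let v : Fin k → Bool → ℕ → EuclideanSpace ℝ (Fin d) := fun j s t => p j s t - u j s t
  have hv_mem : ∀ j s t, v j s t ∈ V := by
    intro j s t
    have h1 : v j s t ∈ Vᗮᗮ := Submodule.sub_starProjection_mem_orthogonal (K := Vᗮ) (p j s t)
    rwa [Submodule.orthogonal_orthogonal] at h1
  have hv_eq : ∀ j s t, v j s t = (V.orthogonalProjectionOnto (p j s t) : EuclideanSpace ℝ (Fin d)) := by
    intro j s t
    have h := Submodule.starProjection_add_starProjection_orthogonal (K := V) (p j s t)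
    exact (eq_sub_of_add_eq h).symm
  have hv_norm : ∀ j s, ∀ t ∈ Finset.Icc 1 T, ‖v j s t‖ ≤ γ' * r := by
    intro j s t ht
    rw [hv_eq]
    have h2 := (hpmem j s t ht).2
    rw [hC] at h2
    simpa using h2
  have hvstep : ∀ j s t t', ‖v j s t - v j s t'‖ ≤ ‖p j s t - p j s t'‖ := by
    intro j s t t'
    rw [hv_eq, hv_eq]
    have : (V.orthogonalProjectionOnto (p j s t) : EuclideanSpace ℝ (Fin d)) - (V.orthogonalProjectionOnto (p j s t') : EuclideanSpace ℝ (Fin d))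
        = (V.orthogonalProjectionOnto (p j s t - p j s t') : EuclideanSpace ℝ (Fin d)) := by simp [map_sub]
    rw [this]; exact hPLip _ _
  -- the z and b vectors
  let z : Fin k → ℕ → EuclideanSpace ℝ (Fin d) := fun j t => (u j true t - u j false t) - (2*(γ*r)) • e j
  have hz_eq : ∀ j t, z j t = (u j true t - θ j true) - (u j false t - θ j false) := by
    intro j t
    simp only [z, θ, sgn]
    norm_num
    module
  have hz_mem : ∀ j t, z j t ∈ Vᗮ := fun j t => by
    refine Submodule.sub_mem _ (Submodule.sub_mem _ (hu_mem _ _ _) (hu_mem _ _ _))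
      (Submodule.smul_mem _ _ (he_mem j))
  have hz_norm : ∀ j, ∀ t ∈ Finset.Icc 1 T, ‖z j t‖ ≤ 2 * r := by
    intro j t ht
    rw [hz_eq]
    calc ‖(u j true t - θ j true) - (u j false t - θ j false)‖
        ≤ ‖u j true t - θ j true‖ + ‖u j false t - θ j false‖ := norm_sub_le _ _
      _ ≤ r + r := add_le_add (hdrift j true t ht) (hdrift j false t ht)
      _ = 2 * r := by ring
  have hz_step : ∀ j t, ‖z j t - z j (t+1)‖ ≤
      ‖u j true t - u j true (t+1)‖ + ‖u j false t - u j false (t+1)‖ := by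
    intro j t
    have : z j t - z j (t+1) = (u j true t - u j true (t+1)) - (u j false t - u j false (t+1)) := by
      simp only [z]; abel
    rw [this]; exact norm_sub_le _ _
  let bb : ℕ → EuclideanSpace ℝ (Fin d) := fun t => ∑ j, ((u j true t - θ j true) + (u j false t - θ j false))
  have hbbt : ∀ t', bb t' = ∑ j, ((u j true t' - θ j true) + (u j false t' - θ j false)) :=
    fun _ => rfl
  have hbb_mem : ∀ t, bb t ∈ Vᗮ := by
    intro t
    refine Submodule.sum_mem _ fun j _ => Submodule.add_mem _
      (Submodule.sub_mem _ (hu_mem _ _ _) (hθ_mem _ _))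
      (Submodule.sub_mem _ (hu_mem _ _ _) (hθ_mem _ _))
  have hbb_norm : ∀ t ∈ Finset.Icc 1 T, ‖bb t‖ ≤ 2 * k * r := by
    intro t ht
    calc ‖bb t‖ ≤ ∑ j : Fin k, ‖(u j true t - θ j true) + (u j false t - θ j false)‖ :=
          norm_sum_le _ _
      _ ≤ ∑ j : Fin k, (2*r) := by
          refine Finset.sum_le_sum fun j _ => ?_
          calc ‖(u j true t - θ j true) + (u j false t - θ j false)‖
              ≤ ‖u j true t - θ j true‖ + ‖u j false t - θ j false‖ := norm_add_le _ _
            _ ≤ r + r := add_le_add (hdrift j true t ht) (hdrift j false t ht)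
            _ = 2*r := by ring
      _ = 2 * k * r := by simp [Finset.sum_const]; ring
  let S : ℕ → ℝ := fun t => ∑ j, (‖u j true t - u j true (t+1)‖ + ‖u j false t - u j false (t+1)‖)
  have hS_nonneg : ∀ t, 0 ≤ S t := by
    intro t
    exact Finset.sum_nonneg fun j _ => add_nonneg (norm_nonneg _) (norm_nonneg _)
  have hbb_step : ∀ t, ‖bb t - bb (t+1)‖ ≤ S t := by
    intro t
    have : bb t - bb (t+1) = ∑ j, (((u j true t - u j true (t+1)) + (u j false t - u j false (t+1)))) := by
      simp only [bb, ← Finset.sum_sub_distrib]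
      congr 1; funext j; abel
    rw [this]
    refine le_trans (norm_sum_le _ _) (Finset.sum_le_sum fun j _ => ?_)
    exact norm_add_le _ _
  have hS_sum : ∑ t ∈ Finset.Ico 1 T, S t ≤ 2 * k * r := by
    rw [Finset.sum_comm (s := Finset.Ico 1 T)]
    calc ∑ j : Fin k, ∑ t ∈ Finset.Ico 1 T, (‖u j true t - u j true (t+1)‖ + ‖u j false t - u j false (t+1)‖)
        ≤ ∑ j : Fin k, (r + r) := by
          refine Finset.sum_le_sum fun j _ => ?_
          rw [Finset.sum_add_distrib]
          exact add_le_add (husum j true) (husum j false)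
      _ = 2 * k * r := by simp [Finset.sum_const]; ring
  -- inner-sum bound helper
  have hsum_inner_z : ∀ t ∈ Finset.Icc 1 T, ∀ w : EuclideanSpace ℝ (Fin d),
      ‖∑ j, ⟪e j, w⟫ • z j t‖ ≤ 2 * r * k * ‖w‖ := by
    intro t ht w
    calc ‖∑ j, ⟪e j, w⟫ • z j t‖ ≤ ∑ j, ‖⟪e j, w⟫ • z j t‖ := norm_sum_le _ _
      _ ≤ ∑ j : Fin k, (2 * r * ‖w‖) := by
          refine Finset.sum_le_sum fun j _ => ?_
          rw [norm_smul, Real.norm_eq_abs]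
          have h1 : |⟪e j, w⟫| ≤ ‖w‖ := by
            have := abs_real_inner_le_norm (e j) w
            rwa [he_norm j, one_mul] at this
          have h2 : ‖z j t‖ ≤ 2 * r := hz_norm j t ht
          have := mul_le_mul h1 h2 (norm_nonneg _) (norm_nonneg _)
          nlinarith [norm_nonneg w, abs_nonneg ⟪e j, w⟫]
      _ = 2 * r * k * ‖w‖ := by simp [Finset.sum_const, Finset.card_univ]; ring
  -- fixed point existence
  have hx_exists : ∀ t ∈ Finset.Icc 1 T, ∃ x : EuclideanSpace ℝ (Fin d), x ∈ Vᗮ ∧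
      (2*(γ*r)) • x + ∑ j, ⟪e j, x⟫ • z j t = -(bb t) := by
    intro t ht
    set g : EuclideanSpace ℝ (Fin d) → EuclideanSpace ℝ (Fin d) :=
      fun x => (2*(γ*r))⁻¹ • (-(bb t) - ∑ j, ⟪e j, x⟫ • z j t) with hg
    have hgdiff : ∀ x y, g x - g y = (2*(γ*r))⁻¹ • (∑ j, ⟪e j, y - x⟫ • z j t) := by
      intro x y
      rw [hg, ← smul_sub]
      congr 1
      have : ∑ j, ⟪e j, y - x⟫ • z j t
          = ∑ j, ⟪e j, y⟫ • z j t - ∑ j, ⟪e j, x⟫ • z j t := by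
        rw [← Finset.sum_sub_distrib]
        refine Finset.sum_congr rfl fun j _ => ?_
        rw [inner_sub_right, sub_smul]
      rw [this]; abel
    have hlip : LipschitzWith (1/2 : NNReal) g := by
      refine LipschitzWith.of_dist_le_mul fun x y => ?_
      rw [dist_eq_norm, dist_eq_norm, hgdiff x y]
      rw [norm_smul, Real.norm_eq_abs, abs_inv, abs_of_pos (by nlinarith : (0:ℝ) < 2*(γ*r))]
      have h1 : ‖∑ j, ⟪e j, y - x⟫ • z j t‖ ≤ 2 * r * k * ‖y - x‖ := hsum_inner_z t ht (y - x)
      have h2 : ‖y - x‖ = ‖x - y‖ := norm_sub_rev _ _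
      have h3 : ((1/2 : NNReal) : ℝ) = 1/2 := by norm_num
      rw [h3]
      rw [h2] at h1
      have hpos : (0:ℝ) < 2*(γ*r) := by nlinarith
      rw [inv_mul_le_iff₀ hpos]
      have hn : (0:ℝ) ≤ ‖x - y‖ := norm_nonneg _
      nlinarith [mul_le_mul_of_nonneg_right (show 2*r*(k:ℝ) ≤ γ*r by nlinarith) hn]
    have hcontr : ContractingWith (1/2 : NNReal) g := ⟨one_half_lt_one, hlip⟩
    have hgmem : ∀ y, g y ∈ Vᗮ := by
      intro y
      rw [hg]
      refine Submodule.smul_mem _ _ (Submodule.sub_mem _ (Submodule.neg_mem _ (hbb_mem t)) ?_)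
      exact Submodule.sum_mem _ fun j _ => Submodule.smul_mem _ _ (hz_mem j t)
    have hfix : g (ContractingWith.fixedPoint g hcontr) = ContractingWith.fixedPoint g hcontr :=
      hcontr.fixedPoint_isFixedPt
    refine ⟨ContractingWith.fixedPoint g hcontr, hfix ▸ hgmem _, ?_⟩
    set x₀ := ContractingWith.fixedPoint g hcontr
    have hne : (2*(γ*r)) ≠ 0 := by positivity
    have h4 : (2*(γ*r)) • x₀ = -(bb t) - ∑ j, ⟪e j, x₀⟫ • z j t := by
      conv_lhs => rw [← hfix]
      simp only [hg, smul_smul, mul_inv_cancel₀ hne, one_smul]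
    rw [h4]; abel
  choose! x hx_mem hx_eq using hx_exists
  -- norm bound on x
  have hγkpos : (0:ℝ) < γ - k := by linarith
  have hx_norm : ∀ t ∈ Finset.Icc 1 T, ‖x t‖ ≤ k / (γ - k) := by
    intro t ht
    have heq := hx_eq t ht
    have h1 : (2*(γ*r)) • x t = -(bb t) - ∑ j, ⟪e j, x t⟫ • z j t := by
      rw [eq_sub_iff_add_eq]; exact heq
    have h2 : ‖(2*(γ*r)) • x t‖ = 2*(γ*r) * ‖x t‖ := by
      rw [norm_smul, Real.norm_eq_abs, abs_of_pos (by nlinarith : (0:ℝ) < 2*(γ*r))]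
    have h3 : ‖(2*(γ*r)) • x t‖ ≤ 2*k*r + 2*r*k*‖x t‖ := by
      rw [h1]
      calc ‖-(bb t) - ∑ j, ⟪e j, x t⟫ • z j t‖
          ≤ ‖-(bb t)‖ + ‖∑ j, ⟪e j, x t⟫ • z j t‖ := norm_sub_le _ _
        _ ≤ 2*k*r + 2*r*k*‖x t‖ := by
            rw [norm_neg]
            exact add_le_add (hbb_norm t ht) (hsum_inner_z t ht (x t))
    rw [h2] at h3
    rw [le_div_iff₀ hγkpos]
    nlinarith [norm_nonneg (x t)]
  have hB1 : k / (γ - k) ≤ 1 := by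
    rw [div_le_one hγkpos]; nlinarith
  -- step bound on x
  have hx_step : ∀ t ∈ Finset.Ico 1 T,
      ‖x t - x (t+1)‖ ≤ (1 + k/(γ-k)) * S t / (2*r*(γ-k)) := by
    intro t ht
    rw [Finset.mem_Ico] at ht
    have ht1 : t ∈ Finset.Icc 1 T := Finset.mem_Icc.mpr ⟨ht.1, le_of_lt ht.2⟩
    have ht2 : t + 1 ∈ Finset.Icc 1 T := Finset.mem_Icc.mpr ⟨by omega, by omega⟩
    have h1 := hx_eq t ht1
    have h2 := hx_eq (t+1) ht2
    have hsplit : ∑ j, ⟪e j, x t⟫ • z j t - ∑ j, ⟪e j, x (t+1)⟫ • z j (t+1)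
        = ∑ j, ⟪e j, x t - x (t+1)⟫ • z j t + ∑ j, ⟪e j, x (t+1)⟫ • (z j t - z j (t+1)) := by
      have helper : ∀ (c c' : ℝ) (w w' : EuclideanSpace ℝ (Fin d)),
          c • w - c' • w' = (c - c') • w + c' • (w - w') := by
        intro c c' w w'; module
      rw [← Finset.sum_sub_distrib, ← Finset.sum_add_distrib]
      refine Finset.sum_congr rfl fun j _ => ?_
      rw [inner_sub_right]
      exact helper _ _ _ _
    have h3 : (2*(γ*r)) • (x t - x (t+1))
        = ((2*(γ*r)) • x t + ∑ j, ⟪e j, x t⟫ • z j t)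
          - ((2*(γ*r)) • x (t+1) + ∑ j, ⟪e j, x (t+1)⟫ • z j (t+1))
          - (∑ j, ⟪e j, x t⟫ • z j t - ∑ j, ⟪e j, x (t+1)⟫ • z j (t+1)) := by
      module
    rw [h1, h2, hsplit] at h3
    have h4 : ‖(2*(γ*r)) • (x t - x (t+1))‖ = 2*(γ*r) * ‖x t - x (t+1)‖ := by
      rw [norm_smul, Real.norm_eq_abs, abs_of_pos (by nlinarith : (0:ℝ) < 2*(γ*r))]
    have h5 : ‖(2*(γ*r)) • (x t - x (t+1))‖
        ≤ S t + (2*r*k*‖x t - x (t+1)‖ + (k/(γ-k)) * S t) := by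
      rw [h3]
      calc ‖-(bb t) - -(bb (t+1)) - (∑ j, ⟪e j, x t - x (t+1)⟫ • z j t
              + ∑ j, ⟪e j, x (t+1)⟫ • (z j t - z j (t+1)))‖
          ≤ ‖-(bb t) - -(bb (t+1))‖ + ‖∑ j, ⟪e j, x t - x (t+1)⟫ • z j t
              + ∑ j, ⟪e j, x (t+1)⟫ • (z j t - z j (t+1))‖ := norm_sub_le _ _
        _ ≤ S t + (2*r*k*‖x t - x (t+1)‖ + (k/(γ-k)) * S t) := by
            refine add_le_add ?_ ?_
            · have : -(bb t) - -(bb (t+1)) = bb (t+1) - bb t := by abel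
              rw [this, norm_sub_rev]
              exact hbb_step t
            · refine le_trans (norm_add_le _ _) (add_le_add (hsum_inner_z t ht1 _) ?_)
              calc ‖∑ j, ⟪e j, x (t+1)⟫ • (z j t - z j (t+1))‖
                  ≤ ∑ j, ‖⟪e j, x (t+1)⟫ • (z j t - z j (t+1))‖ := norm_sum_le _ _
                _ ≤ ∑ j, ‖x (t+1)‖ * ‖z j t - z j (t+1)‖ := by
                    refine Finset.sum_le_sum fun j _ => ?_
                    rw [norm_smul, Real.norm_eq_abs]
                    refine mul_le_mul_of_nonneg_right ?_ (norm_nonneg _)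
                    have := abs_real_inner_le_norm (e j) (x (t+1))
                    rwa [he_norm j, one_mul] at this
                _ ≤ (k/(γ-k)) * S t := by
                    have hxb := hx_norm (t+1) ht2
                    calc ∑ j, ‖x (t+1)‖ * ‖z j t - z j (t+1)‖
                        ≤ ∑ j, (k/(γ-k)) * (‖u j true t - u j true (t+1)‖
                            + ‖u j false t - u j false (t+1)‖) := by
                          refine Finset.sum_le_sum fun j _ => ?_
                          refine mul_le_mul hxb (hz_step j t) (norm_nonneg _) ?_
                          positivity
                      _ = (k/(γ-k)) * S t := by rw [← Finset.mul_sum]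
    rw [h4] at h5
    rw [le_div_iff₀ (show (0:ℝ) < 2*r*(γ-k) by positivity)]
    nlinarith [norm_nonneg (x t - x (t+1)), hS_nonneg t,
      div_nonneg (le_trans zero_le_one hkR) (le_of_lt hγkpos)]
  -- convex weights
  set lam : ℕ → Fin k → Bool → ℝ := fun t j s => (1/(2*(k:ℝ))) * (1 + sgn s * ⟪e j, x t⟫)
    with hlam
  have hkpos : (0:ℝ) < (k:ℝ) := by linarith
  have hinner_abs : ∀ (j : Fin k) (w : EuclideanSpace ℝ (Fin d)), |⟪e j, w⟫| ≤ ‖w‖ := by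
    intro j w
    have := abs_real_inner_le_norm (e j) w
    rwa [he_norm j, one_mul] at this
  have hsgn_abs : ∀ s, |sgn s| = 1 := by intro s; cases s <;> simp [sgn]
  have hsabs : ∀ (t : ℕ) (j : Fin k) (s : Bool) (w : EuclideanSpace ℝ (Fin d)),
      |sgn s * ⟪e j, w⟫| ≤ ‖w‖ := by
    intro t j s w
    rw [abs_mul, hsgn_abs, one_mul]
    exact hinner_abs j w
  have hxB : ∀ t ∈ Finset.Icc 1 T, ‖x t‖ ≤ 1 := fun t ht => le_trans (hx_norm t ht) hB1
  have hlam_nonneg : ∀ t ∈ Finset.Icc 1 T, ∀ (j : Fin k) (s : Bool), 0 ≤ lam t j s := by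
    intro t ht j s
    have h1 := hsabs t j s (x t)
    have h2 := hxB t ht
    have h3 := neg_abs_le (sgn s * ⟪e j, x t⟫)
    have : (0:ℝ) ≤ 1 + sgn s * ⟪e j, x t⟫ := by linarith
    positivity
  have hlam_le : ∀ t ∈ Finset.Icc 1 T, ∀ (j : Fin k) (s : Bool),
      lam t j s ≤ (1/(2*(k:ℝ))) * (1 + k/(γ-k)) := by
    intro t ht j s
    have h1 := hsabs t j s (x t)
    have h2 := hx_norm t ht
    have h3 := le_abs_self (sgn s * ⟪e j, x t⟫)
    rw [hlam]
    have h4 : 1 + sgn s * ⟪e j, x t⟫ ≤ 1 + k/(γ-k) := by linarith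
    have h5 : (0:ℝ) ≤ 1/(2*(k:ℝ)) := by positivity
    exact mul_le_mul_of_nonneg_left h4 h5
  have hlam_sum : ∀ t, ∑ j, ∑ s, lam t j s = 1 := by
    intro t
    have : ∀ j : Fin k, ∑ s, lam t j s = 1/(k:ℝ) := by
      intro j
      rw [Fintype.sum_bool, hlam]
      simp only [sgn]
      norm_num
      ring
    rw [Finset.sum_congr rfl fun j _ => this j]
    rw [Finset.sum_const, Finset.card_univ, Fintype.card_fin, nsmul_eq_mul]
    field_simp
  -- key: the Vᗮ components cancel
  have hkey : ∀ t ∈ Finset.Icc 1 T, ∑ j, ∑ s, lam t j s • u j s t = 0 := by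
    intro t ht
    have hper : ∀ j, ∑ s, lam t j s • u j s t
        = (1/(2*(k:ℝ))) • (((u j true t - θ j true) + (u j false t - θ j false))
            + (⟪e j, x t⟫ • z j t + (2*(γ*r)) • (⟪e j, x t⟫ • e j))) := by
      intro j
      rw [Fintype.sum_bool, hlam]
      simp only [sgn, z, θ]
      norm_num
      module
    calc ∑ j, ∑ s, lam t j s • u j s t
        = (1/(2*(k:ℝ))) • ∑ j, (((u j true t - θ j true) + (u j false t - θ j false))
            + (⟪e j, x t⟫ • z j t + (2*(γ*r)) • (⟪e j, x t⟫ • e j))) := by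
          rw [Finset.smul_sum]
          exact Finset.sum_congr rfl fun j _ => hper j
      _ = (1/(2*(k:ℝ))) • (bb t + ((∑ j, ⟪e j, x t⟫ • z j t) + (2*(γ*r)) • x t)) := by
          congr 1
          have h1 : ∑ j, (2*(γ*r)) • (⟪e j, x t⟫ • e j) = (2*(γ*r)) • x t := by
            rw [← Finset.smul_sum, he_repr (x t) (hx_mem t ht)]
          rw [hbbt]
          simp only [Finset.sum_add_distrib]
          rw [h1]
      _ = (1/(2*(k:ℝ))) • (bb t + -(bb t)) := by
          congr 1
          have h := hx_eq t ht
          rw [add_comm ((2*(γ*r)) • x t) (∑ j, ⟪e j, x t⟫ • z j t)] at h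
          rw [h]
      _ = 0 := by rw [add_neg_cancel, smul_zero]
  -- the averaged path
  set Y : ℕ → EuclideanSpace ℝ (Fin d) := fun t => ∑ j, ∑ s, lam t j s • p j s t with hY
  have hY_prod : ∀ t, Y t = ∑ q : Fin k × Bool, lam t q.1 q.2 • p q.1 q.2 t := by
    intro t
    rw [hY, Fintype.sum_prod_type]
  have hY_K : ∀ t ∈ Finset.Icc 1 T, Y t ∈ K t := by
    intro t ht
    rw [hY_prod]
    refine (hK t).sum_mem (fun q _ => hlam_nonneg t ht q.1 q.2) ?_
      (fun q _ => (hpmem q.1 q.2 t ht).1)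
    rw [Fintype.sum_prod_type]
    exact hlam_sum t
  have hY_v : ∀ t ∈ Finset.Icc 1 T, Y t = ∑ j, ∑ s, lam t j s • v j s t := by
    intro t ht
    have hsplit : ∀ (j : Fin k) (s : Bool),
        lam t j s • p j s t = lam t j s • v j s t + lam t j s • u j s t := by
      intro j s
      rw [← smul_add]
      congr 1
      simp only [v]
      abel
    calc Y t = ∑ j, ∑ s, (lam t j s • v j s t + lam t j s • u j s t) := by
          rw [hY]
          exact Finset.sum_congr rfl fun j _ => Finset.sum_congr rfl fun s _ => hsplit j s
      _ = (∑ j, ∑ s, lam t j s • v j s t) + ∑ j, ∑ s, lam t j s • u j s t := by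
          rw [← Finset.sum_add_distrib]
          exact Finset.sum_congr rfl fun j _ => Finset.sum_add_distrib
      _ = ∑ j, ∑ s, lam t j s • v j s t := by rw [hkey t ht, add_zero]
  have hY_V : ∀ t ∈ Finset.Icc 1 T, Y t ∈ V := by
    intro t ht
    rw [hY_v t ht]
    exact Submodule.sum_mem _ fun j _ => Submodule.sum_mem _ fun s _ =>
      Submodule.smul_mem _ _ (hv_mem j s t)
  -- movement bound per step
  have hmove : ∀ t ∈ Finset.Ico 1 T, ‖Y t - Y (t+1)‖
      ≤ (∑ j, ∑ s, lam t j s * ‖p j s t - p j s (t+1)‖) + γ'*r*‖x t - x (t+1)‖ := by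
    intro t ht
    rw [Finset.mem_Ico] at ht
    have ht1 : t ∈ Finset.Icc 1 T := Finset.mem_Icc.mpr ⟨ht.1, le_of_lt ht.2⟩
    have ht2 : t + 1 ∈ Finset.Icc 1 T := Finset.mem_Icc.mpr ⟨by omega, by omega⟩
    have hdiff : Y t - Y (t+1) = ∑ j, ∑ s, (lam t j s • (v j s t - v j s (t+1))
        + (lam t j s - lam (t+1) j s) • v j s (t+1)) := by
      rw [hY_v t ht1, hY_v (t+1) ht2, ← Finset.sum_sub_distrib]
      refine Finset.sum_congr rfl fun j _ => ?_
      rw [← Finset.sum_sub_distrib]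
      refine Finset.sum_congr rfl fun s _ => ?_
      module
    rw [hdiff]
    have hterm : ∀ (j : Fin k) (s : Bool),
        ‖lam t j s • (v j s t - v j s (t+1)) + (lam t j s - lam (t+1) j s) • v j s (t+1)‖
        ≤ lam t j s * ‖p j s t - p j s (t+1)‖ + (1/(2*(k:ℝ))) * ‖x t - x (t+1)‖ * (γ'*r) := by
      intro j s
      refine le_trans (norm_add_le _ _) (add_le_add ?_ ?_)
      · rw [norm_smul, Real.norm_eq_abs, abs_of_nonneg (hlam_nonneg t ht1 j s)]
        exact mul_le_mul_of_nonneg_left (hvstep j s t (t+1)) (hlam_nonneg t ht1 j s)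
      · rw [norm_smul, Real.norm_eq_abs]
        have h1 : |lam t j s - lam (t+1) j s| ≤ (1/(2*(k:ℝ))) * ‖x t - x (t+1)‖ := by
          have : lam t j s - lam (t+1) j s
              = (1/(2*(k:ℝ))) * (sgn s * ⟪e j, x t - x (t+1)⟫) := by
            rw [hlam, inner_sub_right]
            ring
          rw [this, abs_mul, abs_of_nonneg (by positivity : (0:ℝ) ≤ 1/(2*(k:ℝ)))]
          exact mul_le_mul_of_nonneg_left (hsabs t j s _) (by positivity)
        have h2 : ‖v j s (t+1)‖ ≤ γ'*r := hv_norm j s (t+1) ht2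
        exact mul_le_mul h1 h2 (norm_nonneg _) (by positivity)
    calc ‖∑ j, ∑ s, (lam t j s • (v j s t - v j s (t+1))
            + (lam t j s - lam (t+1) j s) • v j s (t+1))‖
        ≤ ∑ j, ∑ s, ‖lam t j s • (v j s t - v j s (t+1))
            + (lam t j s - lam (t+1) j s) • v j s (t+1)‖ := by
          refine le_trans (norm_sum_le _ _) (Finset.sum_le_sum fun j _ => norm_sum_le _ _)
      _ ≤ ∑ j, ∑ s, (lam t j s * ‖p j s t - p j s (t+1)‖
            + (1/(2*(k:ℝ))) * ‖x t - x (t+1)‖ * (γ'*r)) := by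
          refine Finset.sum_le_sum fun j _ => Finset.sum_le_sum fun s _ => hterm j s
      _ = (∑ j, ∑ s, lam t j s * ‖p j s t - p j s (t+1)‖) + γ'*r*‖x t - x (t+1)‖ := by
          have hper : ∀ j : Fin k, ∑ s, (lam t j s * ‖p j s t - p j s (t+1)‖
              + (1/(2*(k:ℝ))) * ‖x t - x (t+1)‖ * (γ'*r))
              = (∑ s, lam t j s * ‖p j s t - p j s (t+1)‖)
                + 2 * ((1/(2*(k:ℝ))) * ‖x t - x (t+1)‖ * (γ'*r)) := by
            intro j
            rw [Fintype.sum_bool, Fintype.sum_bool]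
            ring
          rw [Finset.sum_congr rfl fun j _ => hper j, Finset.sum_add_distrib,
            Finset.sum_const, Finset.card_univ, Fintype.card_fin, nsmul_eq_mul]
          congr 1
          field_simp
  -- assemble
  refine ⟨Y, fun t ht => ⟨hY_K t ht, hY_V t ht⟩, ?_⟩
  have hBnn : (0:ℝ) ≤ (k:ℝ)/(γ-k) := div_nonneg (by positivity) hγkpos.le
  have hL1nn : (0:ℝ) ≤ 1/(2*(k:ℝ)) * (1 + k/(γ-k)) :=
    mul_nonneg (by positivity) (by linarith)
  -- total movement of each individual path contribution
  have hsum3 : ∑ t ∈ Finset.Ico 1 T, ∑ j, ∑ s, ‖p j s t - p j s (t+1)‖ ≤ 2*k*r := by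
    rw [Finset.sum_comm]
    calc ∑ j : Fin k, ∑ t ∈ Finset.Ico 1 T, ∑ s, ‖p j s t - p j s (t+1)‖
        ≤ ∑ j : Fin k, (2*r) := by
          refine Finset.sum_le_sum fun j _ => ?_
          rw [Finset.sum_comm, Fintype.sum_bool]
          calc ∑ t ∈ Finset.Ico 1 T, ‖p j true t - p j true (t+1)‖
                + ∑ t ∈ Finset.Ico 1 T, ‖p j false t - p j false (t+1)‖
              ≤ r + r := add_le_add (hpsum j true) (hpsum j false)
            _ = 2*r := by ring
      _ = 2*k*r := by
          rw [Finset.sum_const, Finset.card_univ, Fintype.card_fin, nsmul_eq_mul]; ring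
  have hA : ∑ t ∈ Finset.Ico 1 T, ∑ j, ∑ s, lam t j s * ‖p j s t - p j s (t+1)‖
      ≤ (1 + k/(γ-k)) * r := by
    calc ∑ t ∈ Finset.Ico 1 T, ∑ j, ∑ s, lam t j s * ‖p j s t - p j s (t+1)‖
        ≤ ∑ t ∈ Finset.Ico 1 T, ∑ j, ∑ s,
            (1/(2*(k:ℝ)) * (1 + k/(γ-k))) * ‖p j s t - p j s (t+1)‖ := by
          refine Finset.sum_le_sum fun t ht => ?_
          rw [Finset.mem_Ico] at ht
          have ht1 : t ∈ Finset.Icc 1 T := Finset.mem_Icc.mpr ⟨ht.1, le_of_lt ht.2⟩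
          refine Finset.sum_le_sum fun j _ => Finset.sum_le_sum fun s _ => ?_
          exact mul_le_mul_of_nonneg_right (hlam_le t ht1 j s) (norm_nonneg _)
      _ = (1/(2*(k:ℝ)) * (1 + k/(γ-k))) *
            ∑ t ∈ Finset.Ico 1 T, ∑ j, ∑ s, ‖p j s t - p j s (t+1)‖ := by
          simp_rw [Finset.mul_sum]
      _ ≤ (1/(2*(k:ℝ)) * (1 + k/(γ-k))) * (2*k*r) := mul_le_mul_of_nonneg_left hsum3 hL1nn
      _ = (1 + k/(γ-k)) * r := by field_simp
  have hsumx : ∑ t ∈ Finset.Ico 1 T, ‖x t - x (t+1)‖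
      ≤ (1 + k/(γ-k)) * (2*k*r) / (2*r*(γ-k)) := by
    calc ∑ t ∈ Finset.Ico 1 T, ‖x t - x (t+1)‖
        ≤ ∑ t ∈ Finset.Ico 1 T, (1 + k/(γ-k)) * S t / (2*r*(γ-k)) :=
          Finset.sum_le_sum fun t ht => hx_step t ht
      _ = (1 + k/(γ-k)) / (2*r*(γ-k)) * ∑ t ∈ Finset.Ico 1 T, S t := by
          rw [Finset.mul_sum]
          exact Finset.sum_congr rfl fun t _ => by ring
      _ ≤ (1 + k/(γ-k)) / (2*r*(γ-k)) * (2*k*r) := by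
          refine mul_le_mul_of_nonneg_left hS_sum ?_
          exact div_nonneg (by linarith) (by positivity)
      _ = (1 + k/(γ-k)) * (2*k*r) / (2*r*(γ-k)) := by ring
  have hb11 : (k:ℝ)/(γ-k) ≤ 1/11 := by
    rw [div_le_div_iff₀ hγkpos (by norm_num : (0:ℝ) < 11)]
    linarith
  have hbγ : (k:ℝ)/(γ-k) * γ ≤ (12/11) * k := by
    rw [div_mul_eq_mul_div, div_le_iff₀ hγkpos]
    nlinarith [mul_nonneg (le_of_lt hkpos) (by linarith : (0:ℝ) ≤ γ - 12*k)]
  have hKey : (1 + (k:ℝ)/(γ-k)) + γ' * ((1 + k/(γ-k)) * (k/(γ-k))) ≤ 1 + (2+4*γ')*k/γ := by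
    have h1 : (1 + (k:ℝ)/(γ-k)) + γ' * ((1 + k/(γ-k)) * (k/(γ-k))) - 1
        ≤ (2+4*γ')*k/γ := by
      rw [le_div_iff₀ hγpos]
      set b : ℝ := (k:ℝ)/(γ-k) with hbdef
      have h2 : γ' * (b*γ) ≤ γ' * ((12/11)*k) := mul_le_mul_of_nonneg_left hbγ hγ'.le
      have h3 : b*(b*γ) ≤ (1/11)*((12/11)*k) :=
        mul_le_mul hb11 hbγ (mul_nonneg hBnn hγpos.le) (by norm_num)
      have h4 : γ' * (b*(b*γ)) ≤ γ' * ((1/11)*((12/11)*k)) :=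
        mul_le_mul_of_nonneg_left h3 hγ'.le
      nlinarith [hkpos, hγ'.le]
    linarith
  calc ∑ t ∈ Finset.Ico 1 T, ‖Y t - Y (t+1)‖
      ≤ ∑ t ∈ Finset.Ico 1 T, ((∑ j, ∑ s, lam t j s * ‖p j s t - p j s (t+1)‖)
          + γ'*r*‖x t - x (t+1)‖) := Finset.sum_le_sum fun t ht => hmove t ht
    _ = (∑ t ∈ Finset.Ico 1 T, ∑ j, ∑ s, lam t j s * ‖p j s t - p j s (t+1)‖)
          + γ'*r * ∑ t ∈ Finset.Ico 1 T, ‖x t - x (t+1)‖ := by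
        rw [Finset.sum_add_distrib, Finset.mul_sum]
    _ ≤ (1 + k/(γ-k)) * r + γ'*r * ((1 + k/(γ-k)) * (2*k*r) / (2*r*(γ-k))) :=
        add_le_add hA (mul_le_mul_of_nonneg_left hsumx (by positivity))
    _ = ((1 + (k:ℝ)/(γ-k)) + γ' * ((1 + k/(γ-k)) * (k/(γ-k)))) * r := by
        field_simp
    _ ≤ (1 + (2 + 4 * γ') * k / γ) * r := by
        have := mul_le_mul_of_nonneg_right hKey hr.le
        calc ((1 + (k:ℝ)/(γ-k)) + γ' * ((1 + k/(γ-k)) * (k/(γ-k)))) * r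
            ≤ (1 + (2+4*γ')*k/γ) * r := this
          _ = (1 + (2 + 4 * γ') * k / γ) * r := by ring
end
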